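/- arXiv:2211.07410 — 5 statements merged into one kernel-verified Lean document; each statement's English description precedes it below -/
import Mathlib

section
/- Let H_A, H_B, H_I be Hermitian operators on a finite-dimensional tensor-product Hilbert space H_A⊗H_B, with H_A, H_B acting on their respective factors, satisfying [H_I, H_A + H_B] = 0. Let H = H_A + H_B + H_I, ρ a density matrix, ρ(t) = e^{−iHt} ρ e^{iHt}, and Q(t) = tr[(ρ(t) − ρ)H_B]. Define iterated commutators [H_I, H_B]_1 = [H_I, H_B] and [H_I, H_B]_n = [H_I, [H_I, H_B]_{n−1}]. Then for every n ≥ 1 and every t, the n-th time derivative of Q satisfies d^nQ/dt^n (t) = i^n tr( ρ(t) [H_I, H_B]_n ). -/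
open Matrix Kronecker Complex
open scoped ComplexOrder

noncomputable section

/-- Unitary (Schrödinger) evolution `ρ(t) = e^{-iHt} ρ e^{iHt}` (with `ħ = 1`). -/
def evolve {n : Type*} [Fintype n] [DecidableEq n] (H ρ : Matrix n n ℂ) (t : ℝ) :
    Matrix n n ℂ :=
  NormedSpace.exp ((-(I * t)) • H) * ρ * NormedSpace.exp ((I * t) • H)

/-- Iterated commutator `[X, Y]_n`, with `[X, Y]_0 = Y`, `[X, Y]_1 = [X, Y]` and
`[X, Y]_n = [X, [X, Y]_{n-1}]`. -/
def itComm {n : Type*} [Fintype n] (X Y : Matrix n n ℂ) : ℕ → Matrix n n ℂ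
  | 0 => Y
  | k + 1 => ⁅X, itComm X Y k⁆

section aux

attribute [local instance] LieRing.ofAssociativeRing

attribute [local instance] Matrix.linftyOpNormedRing Matrix.linftyOpNormedAlgebra

variable {N : Type*} [Fintype N] [DecidableEq N]

/-- key derivative lemma -/
lemma hasDerivAt_trace_evolve (H ρ X : Matrix N N ℂ) (t : ℝ) :
    HasDerivAt (fun s => (evolve H ρ s * X).trace)
      (I * (evolve H ρ t * ⁅H, X⁆).trace) t := by
  -- derivative of E s = exp ℂ ((-(I*s)) • H)
  have hg : HasDerivAt (fun s : ℝ => (-(I * s) : ℂ)) (-I) t := by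
    simpa [Pi.neg_def] using ((hasDerivAt_id t).ofReal_comp.const_mul I).neg
  have hg' : HasDerivAt (fun s : ℝ => (I * s : ℂ)) I t :=
    by simpa using (hasDerivAt_id t).ofReal_comp.const_mul I
  have hE : HasDerivAt (fun s : ℝ => NormedSpace.exp ((-(I * s) : ℂ) • H))
      ((-I) • (H * NormedSpace.exp ((-(I * t) : ℂ) • H))) t :=
    by have := hasDerivAt_exp_smul_const' (𝕂 := ℂ) H (-(I * t) : ℂ); exact this.scomp t hg
  have hF : HasDerivAt (fun s : ℝ => NormedSpace.exp ((I * s : ℂ) • H))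
      (I • (NormedSpace.exp ((I * t : ℂ) • H) * H)) t :=
    by have := hasDerivAt_exp_smul_const (𝕂 := ℂ) H (I * t : ℂ); exact this.scomp t hg'
  set E := NormedSpace.exp ((-(I * t) : ℂ) • H)
  set F := NormedSpace.exp ((I * t : ℂ) • H)
  have h1 : HasDerivAt (fun s : ℝ => NormedSpace.exp ((-(I * s) : ℂ) • H) * ρ)
      (((-I) • (H * E)) * ρ) t := hE.mul_const ρ
  have h2 : HasDerivAt (fun s : ℝ =>
        (NormedSpace.exp ((-(I * s) : ℂ) • H) * ρ) * NormedSpace.exp ((I * s : ℂ) • H))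
      ((((-I) • (H * E)) * ρ) * F + (E * ρ) * (I • (F * H))) t := h1.mul hF
  have hprod : HasDerivAt (fun s => evolve H ρ s * X)
      (((((-I) • (H * E)) * ρ) * F + (E * ρ) * (I • (F * H))) * X) t := h2.mul_const X
  have := (((Matrix.traceLinearMap N ℂ ℂ).toContinuousLinearMap.restrictScalars
      ℝ)).hasFDerivAt.comp_hasDerivAt t hprod
  convert this using 1
  show I * (E * ρ * F * ⁅H, X⁆).trace
      = (((((-I) • (H * E)) * ρ) * F + (E * ρ) * (I • (F * H))) * X).trace
  rw [Ring.lie_def, mul_sub, Matrix.trace_sub]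
  have e1 : (E * ρ * F * (X * H)).trace = (H * E * ρ * F * X).trace := by
    rw [← mul_assoc, Matrix.trace_mul_comm, ← mul_assoc, ← mul_assoc, ← mul_assoc]
  have e2 : (E * ρ * (F * H) * X).trace = (E * ρ * F * (H * X)).trace := by
    congr 1
    simp only [mul_assoc]
  simp only [add_mul, Matrix.smul_mul, Matrix.mul_smul, Matrix.trace_add, Matrix.trace_smul,
    smul_eq_mul]
  rw [← e1, e2]
  ring
  · rfl
  · rfl

end aux

/-- Under the heat-transfer condition `[H_I, H_A + H_B] = 0`, for the heat
transfer `Q(t) = tr[(ρ(t) - ρ)H_B]` with `ρ(t) = e^{-iHt} ρ e^{iHt}`, the `n`-th time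
derivative is `dⁿQ/dtⁿ(t) = iⁿ tr(ρ(t) [H_I, H_B]_n)` for every `n ≥ 1` and every `t`. -/
theorem heat_transfer_nth_derivative
    {m n : Type*} [Fintype m] [DecidableEq m] [Fintype n] [DecidableEq n]
    (HA : Matrix m m ℂ) (HB : Matrix n n ℂ) (HI : Matrix (m × n) (m × n) ℂ)
    (hHA : HA.IsHermitian) (hHB : HB.IsHermitian) (hHI : HI.IsHermitian)
    (hcomm : ⁅HI, HA ⊗ₖ (1 : Matrix n n ℂ) + (1 : Matrix m m ℂ) ⊗ₖ HB⁆ = 0)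
    (ρ : Matrix (m × n) (m × n) ℂ) (hρ : ρ.PosSemidef) (hρtr : ρ.trace = 1)
    (H : Matrix (m × n) (m × n) ℂ)
    (hH : H = HA ⊗ₖ (1 : Matrix n n ℂ) + (1 : Matrix m m ℂ) ⊗ₖ HB + HI)
    (Q : ℝ → ℂ)
    (hQ : Q = fun t => ((evolve H ρ t - ρ) * ((1 : Matrix m m ℂ) ⊗ₖ HB)).trace) :
    ∀ k : ℕ, 1 ≤ k → ∀ t : ℝ,
      iteratedDeriv k Q t
        = I ^ k * (evolve H ρ t * itComm HI ((1 : Matrix m m ℂ) ⊗ₖ HB) k).trace := by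
  letI := LieRing.ofAssociativeRing (A := Matrix (m × n) (m × n) ℂ)
  set H0 := HA ⊗ₖ (1 : Matrix n n ℂ) + (1 : Matrix m m ℂ) ⊗ₖ HB with hH0
  set X := (1 : Matrix m m ℂ) ⊗ₖ HB with hX
  -- [H0, itComm HI X k] = 0 for all k
  have hH0HI : ⁅H0, HI⁆ = 0 := by rw [← lie_skew, hcomm, neg_zero]
  have hzero : ∀ k, ⁅H0, itComm HI X k⁆ = 0 := by
    intro k
    induction k with
    | zero =>
      show ⁅H0, X⁆ = 0
      rw [hH0, hX, add_lie, Ring.lie_def, Ring.lie_def]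
      simp [← Matrix.mul_kronecker_mul]
    | succ k ih =>
      show ⁅H0, ⁅HI, itComm HI X k⁆⁆ = 0
      rw [leibniz_lie, hH0HI, ih]
      simp
  have hstep : ∀ k, ⁅H, itComm HI X k⁆ = itComm HI X (k + 1) := by
    intro k
    rw [hH, add_lie, hzero k, zero_add]
    rfl
  -- main derivative lemma in convenient form
  have hderiv : ∀ (Y : Matrix (m × n) (m × n) ℂ) (t : ℝ),
      HasDerivAt (fun s => (evolve H ρ s * Y).trace)
        (I * (evolve H ρ t * ⁅H, Y⁆).trace) t := fun Y t =>
    hasDerivAt_trace_evolve H ρ Y t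
  intro k hk
  induction k with
  | zero => omega
  | succ k ih =>
    intro t
    rcases Nat.eq_or_lt_of_le hk with h1 | h1
    · -- k + 1 = 1, i.e. k = 0
      have hk0 : k = 0 := by omega
      subst hk0
      rw [iteratedDeriv_one]
      have : HasDerivAt Q (I * (evolve H ρ t * ⁅H, X⁆).trace) t := by
        rw [hQ]
        have := (hderiv X t).sub_const ((ρ * X).trace)
        convert this using 2 with s
        · rfl
        rw [Matrix.sub_mul, Matrix.trace_sub]
      have h0 : ⁅H, X⁆ = itComm HI X 1 := hstep 0
      rw [this.deriv, h0, pow_one]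
    · have hk1 : 1 ≤ k := by omega
      have ihk := ih hk1
      rw [iteratedDeriv_succ]
      have hfun : iteratedDeriv k Q = fun s =>
          I ^ k * (evolve H ρ s * itComm HI X k).trace := funext ihk
      rw [hfun]
      have : HasDerivAt (fun s => I ^ k * (evolve H ρ s * itComm HI X k).trace)
          (I ^ k * (I * (evolve H ρ t * ⁅H, itComm HI X k⁆).trace)) t :=
        (hderiv (itComm HI X k) t).const_mul (I ^ k)
      rw [this.deriv, hstep k]
      ring
end
end

section
/- Frequency-matching condition. With qubits indexed by a finite set, frequencies ω_u ≥ 0, H_0 = −(1/2) Σ_u ω_u σ^z_u, and an interaction H_I = Σ c_{S_+,S_−,S_z} Ξ_{S_+,S_−,S_z} written as a complex linear combination over configurations (S_+, S_−, S_z) of pairwise disjoint subsets, where Ξ_{S_+,S_−,S_z} = (Π_{u∈S_+}σ^+_u)(Π_{v∈S_−}σ^−_v)(Π_{w∈S_z}σ^z_w): if [H_0, H_I] = 0 then for every configuration, either c_{S_+,S_−,S_z} = 0 or Σ_{u∈S_+} ω_u = Σ_{v∈S_−} ω_v. -/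
open Matrix Kronecker Complex

noncomputable section

/-- Pauli X. -/
def σx : Matrix (Fin 2) (Fin 2) ℂ := !![0, 1; 1, 0]
/-- Pauli Y. -/
def σy : Matrix (Fin 2) (Fin 2) ℂ := !![0, -I; I, 0]
/-- Pauli Z. -/
def σz : Matrix (Fin 2) (Fin 2) ℂ := !![1, 0; 0, -1]
/-- Raising operator `σ⁺ = (σˣ + iσʸ)/2`. -/
def σp : Matrix (Fin 2) (Fin 2) ℂ := !![0, 1; 0, 0]
/-- Lowering operator `σ⁻ = (σˣ - iσʸ)/2`. -/
def σm : Matrix (Fin 2) (Fin 2) ℂ := !![0, 0; 1, 0]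

/-- Tensor product of a family of single-qubit operators, as a matrix on `⊗_{i : ι} ℂ²`. -/
def tpow {ι : Type*} [Fintype ι] (M : ι → Matrix (Fin 2) (Fin 2) ℂ) :
    Matrix (ι → Fin 2) (ι → Fin 2) ℂ :=
  Matrix.of fun f g => ∏ i, M i (f i) (g i)

/-- The single-qubit operator `M` acting on qubit `u`, tensored with the identity elsewhere. -/
def opAt {ι : Type*} [Fintype ι] [DecidableEq ι] (u : ι) (M : Matrix (Fin 2) (Fin 2) ℂ) :
    Matrix (ι → Fin 2) (ι → Fin 2) ℂ :=
  tpow fun i => if i = u then M else 1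

/-- The single-qubit Gibbs state `e^{βωσᶻ/2}/(2cosh(βω/2))` of the Hamiltonian `-(ω/2)σᶻ`
at inverse temperature `β`. -/
def gibbsQubit (β ω : ℝ) : Matrix (Fin 2) (Fin 2) ℂ :=
  ((2 * Real.cosh (β * ω / 2) : ℝ) : ℂ)⁻¹ •
    !![(Real.exp (β * ω / 2) : ℂ), 0; 0, (Real.exp (-(β * ω) / 2) : ℂ)]

/-- Reduced density matrix of a multi-qubit state on the single qubit `u`
(partial trace over all other qubits). -/
def rdm1 {ι : Type*} [Fintype ι] [DecidableEq ι] (u : ι)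
    (ρ : Matrix (ι → Fin 2) (ι → Fin 2) ℂ) : Matrix (Fin 2) (Fin 2) ℂ :=
  Matrix.of fun a b => ∑ g : ι → Fin 2, if g u = a then ρ g (Function.update g u b) else 0

/-- Reduced density matrix of a multi-qubit state on the (distinct) pair of qubits `u, v`
(partial trace over all other qubits). -/
def rdm2 {ι : Type*} [Fintype ι] [DecidableEq ι] (u v : ι)
    (ρ : Matrix (ι → Fin 2) (ι → Fin 2) ℂ) : Matrix (Fin 2 × Fin 2) (Fin 2 × Fin 2) ℂ :=
  Matrix.of fun p q => ∑ g : ι → Fin 2,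
    if g u = p.1 ∧ g v = p.2 then
      ρ g (Function.update (Function.update g u q.1) v q.2) else 0

/-- Reduced density matrix of a multi-qubit state on the (distinct) triple of qubits `u, v, w`
(partial trace over all other qubits). -/
def rdm3 {ι : Type*} [Fintype ι] [DecidableEq ι] (u v w : ι)
    (ρ : Matrix (ι → Fin 2) (ι → Fin 2) ℂ) :
    Matrix ((Fin 2 × Fin 2) × Fin 2) ((Fin 2 × Fin 2) × Fin 2) ℂ :=
  Matrix.of fun p q => ∑ g : ι → Fin 2,
    if g u = p.1.1 ∧ g v = p.1.2 ∧ g w = p.2 then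
      ρ g (Function.update (Function.update (Function.update g u q.1.1) v q.1.2) w q.2) else 0

namespace FMaux

variable {ι : Type*} [Fintype ι] [DecidableEq ι]

lemma tpow_mul (A B : ι → Matrix (Fin 2) (Fin 2) ℂ) :
    tpow A * tpow B = tpow (fun i => A i * B i) := by
  ext x y
  simp only [tpow, Matrix.mul_apply, Matrix.of_apply, ← Finset.prod_mul_distrib]
  rw [Fintype.prod_sum (fun i k => A i (x i) k * B i k (y i))]

lemma tpow_conjT (A : ι → Matrix (Fin 2) (Fin 2) ℂ) :
    (tpow A)ᴴ = tpow (fun i => (A i)ᴴ) := by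
  ext x y
  simp only [tpow, Matrix.conjTranspose_apply, Matrix.of_apply]
  exact star_prod _ _

lemma trace_tpow (A : ι → Matrix (Fin 2) (Fin 2) ℂ) :
    (tpow A).trace = ∏ i, (A i).trace := by
  simp only [Matrix.trace, Matrix.diag, tpow, Matrix.of_apply]
  rw [← Fintype.prod_sum (fun i k => A i k k)]

/-- single-qubit operator alphabet -/
def Mq : Fin 4 → Matrix (Fin 2) (Fin 2) ℂ := ![1, σp, σm, σz]
/-- Hilbert–Schmidt norms -/
def nq : Fin 4 → ℂ := ![2, 1, 1, 2]
/-- commutator eigenvalue weights -/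
def dq : Fin 4 → ℂ := ![0, 2, -2, 0]

lemma fin4_cases (a : Fin 4) : a = 0 ∨ a = 1 ∨ a = 2 ∨ a = 3 := by fin_cases a <;> simp

lemma nq_ne_zero (a : Fin 4) : nq a ≠ 0 := by
  rcases fin4_cases a with h | h | h | h <;> subst h <;> simp [nq]

lemma t1_eq (a b : Fin 4) : ((Mq a)ᴴ * Mq b).trace = if a = b then nq a else 0 := by
  fin_cases a <;> fin_cases b <;>
    simp [Mq, nq, σp, σm, σz, Matrix.trace_fin_two, Matrix.mul_apply,
      Fin.sum_univ_two, Matrix.one_apply] <;> norm_num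

lemma tz_sub (a b : Fin 4) :
    ((Mq a)ᴴ * (σz * Mq b)).trace - ((Mq a)ᴴ * (Mq b * σz)).trace
      = if a = b then dq a else 0 := by
  fin_cases a <;> fin_cases b <;>
    simp [Mq, dq, σp, σm, σz, Matrix.trace_fin_two, Matrix.mul_apply,
      Fin.sum_univ_two, Matrix.one_apply] <;> norm_num

lemma prod_diff (f g : ι → Fin 4) (u : ι) :
    (∏ i, ((Mq (f i))ᴴ * ((if i = u then σz else 1) * Mq (g i))).trace)
      - (∏ i, ((Mq (f i))ᴴ * (Mq (g i) * (if i = u then σz else 1))).trace)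
      = (if g = f then 1 else 0) * ∏ i, (if i = u then dq (f i) else nq (f i)) := by
  rw [← Finset.mul_prod_erase _ _ (Finset.mem_univ u),
      ← Finset.mul_prod_erase _ _ (Finset.mem_univ u),
      ← Finset.mul_prod_erase _
        (fun i => (if i = u then dq (f i) else nq (f i))) (Finset.mem_univ u)]
  simp only [eq_self_iff_true, if_true]
  have e1 : (∏ i ∈ Finset.univ.erase u,
      ((Mq (f i))ᴴ * ((if i = u then σz else 1) * Mq (g i))).trace)
      = ∏ i ∈ Finset.univ.erase u, ((Mq (f i))ᴴ * Mq (g i)).trace :=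
    Finset.prod_congr rfl fun i hi => by
      rw [if_neg (Finset.mem_erase.1 hi).1, one_mul]
  have e2 : (∏ i ∈ Finset.univ.erase u,
      ((Mq (f i))ᴴ * (Mq (g i) * (if i = u then σz else 1))).trace)
      = ∏ i ∈ Finset.univ.erase u, ((Mq (f i))ᴴ * Mq (g i)).trace :=
    Finset.prod_congr rfl fun i hi => by
      rw [if_neg (Finset.mem_erase.1 hi).1, mul_one]
  rw [e1, e2, ← sub_mul, tz_sub]
  by_cases hgf : g = f
  · subst hgf
    simp only [if_pos rfl, one_mul]
    have : (∏ i ∈ Finset.univ.erase u, ((Mq (g i))ᴴ * Mq (g i)).trace)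
        = ∏ i ∈ Finset.univ.erase u, (if i = u then dq (g i) else nq (g i)) :=
      Finset.prod_congr rfl fun i hi => by
        rw [t1_eq, if_pos rfl, if_neg (Finset.mem_erase.1 hi).1]
    rw [this]
    simp
  · rw [if_neg hgf, zero_mul]
    by_cases hu : f u = g u
    · obtain ⟨j, hj⟩ : ∃ j, f j ≠ g j := by
        by_contra h
        push_neg at h
        exact hgf (funext fun j => (h j).symm)
      have hju : j ≠ u := fun h => hj (h ▸ hu)
      have : (∏ i ∈ Finset.univ.erase u, ((Mq (f i))ᴴ * Mq (g i)).trace) = 0 :=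
        Finset.prod_eq_zero (Finset.mem_erase.2 ⟨hju, Finset.mem_univ j⟩)
          (by rw [t1_eq, if_neg hj])
      rw [this, mul_zero]
    · rw [if_neg hu, zero_mul]

lemma K_eq (f : ι → Fin 4) (u : ι) :
    (∏ i, if i = u then dq (f i) else nq (f i)) = dq (f u) * ∏ i, nq (f i) := by
  have key : ∀ a : Fin 4, dq a = 0 ∨ nq a = 1 := by
    intro a; fin_cases a <;> norm_num [dq, nq]
  rcases key (f u) with h | h
  · rw [h, zero_mul]
    exact Finset.prod_eq_zero (Finset.mem_univ u) (by rw [if_pos rfl, h])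
  · rw [← Finset.mul_prod_erase _ _ (Finset.mem_univ u),
        ← Finset.mul_prod_erase _ (fun i => nq (f i)) (Finset.mem_univ u)]
    simp only [eq_self_iff_true, if_true]
    rw [h, one_mul]
    congr 1
    exact Finset.prod_congr rfl fun i hi => if_neg (Finset.mem_erase.1 hi).1

end FMaux


/-- **frequency-matching condition.** Encode a configuration of pairwise
disjoint subsets `(S₊, S₋, S_z)` of qubits as a function `f : ι → Fin 4` assigning to each
qubit `1`/`2`/`3` according as it lies in `S₊`/`S₋`/`S_z` (and `0` otherwise), with
`Ξ_f = ⊗_i M(f i)`, `M = (I, σ⁺, σ⁻, σᶻ)`. If `H₀ = -(1/2) Σ_u ω_u σᶻ_u` (`ω_u ≥ 0`) and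
`H_I = Σ_f c_f Ξ_f` satisfy `[H₀, H_I] = 0`, then for every configuration `f` either
`c_f = 0` or `Σ_{u∈S₊} ω_u = Σ_{v∈S₋} ω_v`. -/
theorem frequency_matching_condition {ι : Type*} [Fintype ι] [DecidableEq ι]
    (ω : ι → ℝ) (hω : ∀ u, 0 ≤ ω u)
    (c : (ι → Fin 4) → ℂ)
    (H₀ : Matrix (ι → Fin 2) (ι → Fin 2) ℂ)
    (hH₀ : H₀ = (-(1/2) : ℂ) • ∑ u, (ω u : ℂ) • opAt u σz)
    (HI : Matrix (ι → Fin 2) (ι → Fin 2) ℂ)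
    (hHI : HI = ∑ f : ι → Fin 4,
      c f • tpow fun i => ![(1 : Matrix (Fin 2) (Fin 2) ℂ), σp, σm, σz] (f i))
    (hcomm : ⁅H₀, HI⁆ = 0) :
    ∀ f : ι → Fin 4, c f = 0 ∨
      ∑ u ∈ Finset.univ.filter (fun u => f u = 1), ω u
        = ∑ v ∈ Finset.univ.filter (fun v => f v = 2), ω v := by
  intro f
  classical
  set X : Matrix (ι → Fin 2) (ι → Fin 2) ℂ := tpow fun i => (FMaux.Mq (f i))ᴴ with hX
  set Ξ : (ι → Fin 4) → Matrix (ι → Fin 2) (ι → Fin 2) ℂ :=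
    fun g => tpow fun i => FMaux.Mq (g i) with hΞ
  set Nf : ℂ := ∏ i, FMaux.nq (f i) with hNf
  have hHI' : HI = ∑ g : ι → Fin 4, c g • Ξ g := hHI
  have h0 : (X * ⁅H₀, HI⁆).trace = 0 := by rw [hcomm, mul_zero, Matrix.trace_zero]
  rw [Ring.lie_def] at h0
  have tr1 : ∀ (u : ι) (g : ι → Fin 4), (X * (opAt u σz * Ξ g)).trace
      = ∏ i, ((FMaux.Mq (f i))ᴴ * ((if i = u then σz else 1) * FMaux.Mq (g i))).trace := by
    intro u g
    rw [hX, hΞ, show opAt u σz = tpow (fun i => if i = u then σz else 1) from rfl,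
      FMaux.tpow_mul, FMaux.tpow_mul, FMaux.trace_tpow]
  have tr2 : ∀ (u : ι) (g : ι → Fin 4), (X * (Ξ g * opAt u σz)).trace
      = ∏ i, ((FMaux.Mq (f i))ᴴ * (FMaux.Mq (g i) * (if i = u then σz else 1))).trace := by
    intro u g
    rw [hX, hΞ, show opAt u σz = tpow (fun i => if i = u then σz else 1) from rfl,
      FMaux.tpow_mul, FMaux.tpow_mul, FMaux.trace_tpow]
  have expand : (X * (H₀ * HI - HI * H₀)).trace
      = ∑ u, ∑ g, (-(1/2) : ℂ) * ω u * c g *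
          ((X * (opAt u σz * Ξ g)).trace - (X * (Ξ g * opAt u σz)).trace) := by
    rw [hH₀, hHI']
    simp only [smul_mul_assoc, mul_smul_comm, Finset.smul_sum, Finset.sum_mul,
      Finset.mul_sum, Matrix.mul_sub, Matrix.trace_sub, Matrix.trace_sum,
      Matrix.trace_smul, smul_smul, smul_eq_mul, mul_assoc, mul_sub,
      Finset.sum_sub_distrib]
    conv_lhs => rw [Finset.sum_comm (s := (Finset.univ : Finset (ι → Fin 4)))
      (t := (Finset.univ : Finset ι))
      (f := fun g u => c g * ((-(1/2) : ℂ) * ((ω u : ℂ) * (X * (opAt u σz * Ξ g)).trace)))]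
    congr 1
    refine Finset.sum_congr rfl fun u _ => Finset.sum_congr rfl fun g _ => by ring
  rw [expand] at h0
  have step : ∀ (u : ι) (g : ι → Fin 4),
      (X * (opAt u σz * Ξ g)).trace - (X * (Ξ g * opAt u σz)).trace
        = (if g = f then 1 else 0) * (FMaux.dq (f u) * Nf) := by
    intro u g
    rw [tr1, tr2, FMaux.prod_diff, FMaux.K_eq]
  simp only [step] at h0
  have h2 : ∀ u : ι, ∑ g : ι → Fin 4, (-(1/2) : ℂ) * ω u * c g *
      ((if g = f then 1 else 0) * (FMaux.dq (f u) * Nf))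
        = (-(1/2)) * ω u * c f * (FMaux.dq (f u) * Nf) := by
    intro u
    rw [Finset.sum_eq_single f]
    · rw [if_pos rfl, one_mul]
    · intro g _ hg; rw [if_neg hg, zero_mul, mul_zero]
    · intro h; exact absurd (Finset.mem_univ f) h
  rw [Finset.sum_congr rfl fun u _ => h2 u] at h0
  have hd : ∀ u : ι, (ω u : ℂ) * FMaux.dq (f u)
      = (if f u = 1 then 2 * (ω u : ℂ) else 0) - (if f u = 2 then 2 * (ω u : ℂ) else 0) := by
    intro u
    rcases FMaux.fin4_cases (f u) with h | h | h | h <;>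
      simp [h, FMaux.dq, show (0:Fin 4) ≠ 1 by decide, show (0:Fin 4) ≠ 2 by decide,
        show (3:Fin 4) ≠ 1 by decide, show (3:Fin 4) ≠ 2 by decide,
        show (1:Fin 4) ≠ 2 by decide, show (2:Fin 4) ≠ 1 by decide] <;> ring
  have hsum2 : ∑ u, (ω u : ℂ) * FMaux.dq (f u)
      = 2 * ((∑ u ∈ Finset.univ.filter (fun u => f u = 1), ω u : ℝ) : ℂ)
        - 2 * ((∑ v ∈ Finset.univ.filter (fun v => f v = 2), ω v : ℝ) : ℂ) := by
    rw [Finset.sum_congr rfl fun u _ => hd u, Finset.sum_sub_distrib,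
      ← Finset.sum_filter, ← Finset.sum_filter]
    push_cast
    rw [Finset.mul_sum, Finset.mul_sum]
  have hNf0 : Nf ≠ 0 := by
    rw [hNf]
    exact Finset.prod_ne_zero_iff.2 fun i _ => FMaux.nq_ne_zero (f i)
  have final : c f * (((∑ u ∈ Finset.univ.filter (fun u => f u = 1), ω u : ℝ) : ℂ)
      - ((∑ v ∈ Finset.univ.filter (fun v => f v = 2), ω v : ℝ) : ℂ)) * (-Nf) = 0 := by
    rw [← h0]
    rw [show (∑ u, (-(1/2):ℂ) * ω u * c f * (FMaux.dq (f u) * Nf))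
        = (-(1/2)) * c f * Nf * ∑ u, (ω u : ℂ) * FMaux.dq (f u) by
      rw [Finset.mul_sum]; exact Finset.sum_congr rfl fun u _ => by ring]
    rw [hsum2]
    ring
  rcases mul_eq_zero.1 final with hcf | hNf'
  · rcases mul_eq_zero.1 hcf with hcf | hsub
    · exact Or.inl hcf
    · right
      have := sub_eq_zero.1 hsub
      exact_mod_cast this
  · exact absurd (neg_eq_zero.1 hNf') hNf0
end
end

section
/- Characterization of two-body heat-transfer interactions for a qubit pair. Let A and B be two qubits with frequencies ω_A, ω_B > 0, H_0 = −(ω_A/2)σ^z⊗I − (ω_B/2)I⊗σ^z, and H_I = Σ_{a,b∈{x,y,z}} c^{ab} σ^a⊗σ^b with real coefficients c^{ab}. Then [H_0, H_I] = 0 if and only if: c^{xz} = c^{yz} = c^{zx} = c^{zy} = 0, and either (i) ω_A ≠ ω_B and c^{xx} = c^{xy} = c^{yx} = c^{yy} = 0, or (ii) ω_A = ω_B and c^{xx} = c^{yy}, c^{xy} = −c^{yx} (c^{zz} is unconstrained in both cases). Equivalently, a frequency-matched commuting two-body interaction is of the flip-flop form c σ^−⊗σ^+ + c̄ σ^+⊗σ^−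 plus a σ^z⊗σ^z term. -/
open Matrix Kronecker Complex

noncomputable section

set_option maxHeartbeats 2000000 in
private lemma two_body_aux1 (ωA ωB : ℝ) (c : Fin 3 → Fin 3 → ℝ)
    (c02 : c 0 2 = 0) (c12 : c 1 2 = 0) (c20 : c 2 0 = 0) (c21 : c 2 1 = 0)
    (c00 : c 0 0 = 0) (c01 : c 0 1 = 0) (c10 : c 1 0 = 0) (c11 : c 1 1 = 0) :
    ∀ (i j : Fin 2 × Fin 2),
    ((((-(ωA/2) : ℝ) : ℂ) • (σz ⊗ₖ (1 : Matrix (Fin 2) (Fin 2) ℂ))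
        + ((-(ωB/2) : ℝ) : ℂ) • ((1 : Matrix (Fin 2) (Fin 2) ℂ) ⊗ₖ σz))
      * (∑ a, ∑ b, ((c a b : ℝ) : ℂ) • (![σx,σy,σz] a ⊗ₖ ![σx,σy,σz] b))
      - (∑ a, ∑ b, ((c a b : ℝ) : ℂ) • (![σx,σy,σz] a ⊗ₖ ![σx,σy,σz] b))
      * (((-(ωA/2) : ℝ) : ℂ) • (σz ⊗ₖ (1 : Matrix (Fin 2) (Fin 2) ℂ))
        + ((-(ωB/2) : ℝ) : ℂ) • ((1 : Matrix (Fin 2) (Fin 2) ℂ) ⊗ₖ σz))) i j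
      = (0 : Matrix (Fin 2 × Fin 2) (Fin 2 × Fin 2) ℂ) i j := by
  rintro ⟨i, j⟩ ⟨k, l⟩
  fin_cases i <;> fin_cases j <;> fin_cases k <;> fin_cases l <;>
    simp only [Fin.sum_univ_three, Matrix.cons_val_zero, Matrix.cons_val_one, Matrix.head_cons,
      Matrix.cons_val_two, Matrix.tail_cons, Fin.mk_zero, Fin.mk_one,
      Matrix.sub_apply, Matrix.mul_apply, Fintype.sum_prod_type, Fin.sum_univ_two,
      Matrix.add_apply, Matrix.smul_apply, Matrix.kroneckerMap_apply, Matrix.one_apply,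
      σx, σy, σz, Matrix.cons_val', Matrix.cons_val_fin_one, Matrix.empty_val',
      Matrix.zero_apply, smul_eq_mul, c02, c12, c20, c21, c00, c01, c10, c11] <;>
    push_cast <;> ring_nf

set_option maxHeartbeats 2000000 in
private lemma two_body_aux2 (ωA : ℝ) (c : Fin 3 → Fin 3 → ℝ)
    (c02 : c 0 2 = 0) (c12 : c 1 2 = 0) (c20 : c 2 0 = 0) (c21 : c 2 1 = 0)
    (cxx : c 0 0 = c 1 1) (cxy : c 0 1 = -(c 1 0)) :
    ∀ (i j : Fin 2 × Fin 2),
    ((((-(ωA/2) : ℝ) : ℂ) • (σz ⊗ₖ (1 : Matrix (Fin 2) (Fin 2) ℂ))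
        + ((-(ωA/2) : ℝ) : ℂ) • ((1 : Matrix (Fin 2) (Fin 2) ℂ) ⊗ₖ σz))
      * (∑ a, ∑ b, ((c a b : ℝ) : ℂ) • (![σx,σy,σz] a ⊗ₖ ![σx,σy,σz] b))
      - (∑ a, ∑ b, ((c a b : ℝ) : ℂ) • (![σx,σy,σz] a ⊗ₖ ![σx,σy,σz] b))
      * (((-(ωA/2) : ℝ) : ℂ) • (σz ⊗ₖ (1 : Matrix (Fin 2) (Fin 2) ℂ))
        + ((-(ωA/2) : ℝ) : ℂ) • ((1 : Matrix (Fin 2) (Fin 2) ℂ) ⊗ₖ σz))) i j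
      = (0 : Matrix (Fin 2 × Fin 2) (Fin 2 × Fin 2) ℂ) i j := by
  rintro ⟨i, j⟩ ⟨k, l⟩
  fin_cases i <;> fin_cases j <;> fin_cases k <;> fin_cases l <;>
    simp only [Fin.sum_univ_three, Matrix.cons_val_zero, Matrix.cons_val_one, Matrix.head_cons,
      Matrix.cons_val_two, Matrix.tail_cons, Fin.mk_zero, Fin.mk_one,
      Matrix.sub_apply, Matrix.mul_apply, Fintype.sum_prod_type, Fin.sum_univ_two,
      Matrix.add_apply, Matrix.smul_apply, Matrix.kroneckerMap_apply, Matrix.one_apply,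
      σx, σy, σz, Matrix.cons_val', Matrix.cons_val_fin_one, Matrix.empty_val',
      Matrix.zero_apply, smul_eq_mul, c02, c12, c20, c21, cxx, cxy] <;>
    norm_num <;> push_cast <;> ring_nf

set_option maxHeartbeats 2000000 in
/-- Characterization of two-body heat-transfer interactions for a qubit
pair: with `H₀ = -(ω_A/2)σᶻ⊗I - (ω_B/2)I⊗σᶻ` (`ω_A, ω_B > 0`) and
`H_I = Σ_{a,b} c^{ab} σᵃ⊗σᵇ` (real coefficients, `a, b ∈ {x,y,z}` indexed by `0,1,2`),
`[H₀, H_I] = 0` iff `c^{xz} = c^{yz} = c^{zx} = c^{zy} = 0` and either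
(i) `ω_A ≠ ω_B` and `c^{xx} = c^{xy} = c^{yx} = c^{yy} = 0`, or
(ii) `ω_A = ω_B` and `c^{xx} = c^{yy}`, `c^{xy} = -c^{yx}` (`c^{zz}` unconstrained). -/
theorem two_body_heat_transfer_characterization
    (ωA ωB : ℝ) (hωA : 0 < ωA) (hωB : 0 < ωB)
    (c : Fin 3 → Fin 3 → ℝ)
    (P : Fin 3 → Matrix (Fin 2) (Fin 2) ℂ) (hP : P = ![σx, σy, σz])
    (H₀ HI : Matrix (Fin 2 × Fin 2) (Fin 2 × Fin 2) ℂ)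
    (hH₀ : H₀ = ((-(ωA/2) : ℝ) : ℂ) • (σz ⊗ₖ (1 : Matrix (Fin 2) (Fin 2) ℂ))
        + ((-(ωB/2) : ℝ) : ℂ) • ((1 : Matrix (Fin 2) (Fin 2) ℂ) ⊗ₖ σz))
    (hHI : HI = ∑ a, ∑ b, ((c a b : ℝ) : ℂ) • (P a ⊗ₖ P b)) :
    ⁅H₀, HI⁆ = 0 ↔
      (c 0 2 = 0 ∧ c 1 2 = 0 ∧ c 2 0 = 0 ∧ c 2 1 = 0 ∧
        ((ωA ≠ ωB ∧ c 0 0 = 0 ∧ c 0 1 = 0 ∧ c 1 0 = 0 ∧ c 1 1 = 0) ∨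
         (ωA = ωB ∧ c 0 0 = c 1 1 ∧ c 0 1 = -(c 1 0)))) := by
  have hA := hωA.ne'
  have hB := hωB.ne'
  have hAB : ωA + ωB ≠ 0 := by positivity
  subst hP hH₀ hHI
  rw [Ring.lie_def, ← Matrix.ext_iff]
  constructor
  · intro h
    have h01 := h (0,0) (0,1)
    have h02 := h (0,0) (1,0)
    have h03 := h (0,0) (1,1)
    have h12 := h (0,1) (1,0)
    simp only [Fin.sum_univ_three, Matrix.cons_val_zero, Matrix.cons_val_one, Matrix.head_cons,
      Matrix.cons_val_two, Matrix.tail_cons,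
      Matrix.sub_apply, Matrix.mul_apply, Fintype.sum_prod_type, Fin.sum_univ_two,
      Matrix.add_apply, Matrix.smul_apply, Matrix.kroneckerMap_apply, Matrix.one_apply,
      σx, σy, σz, Matrix.cons_val', Matrix.cons_val_fin_one, Matrix.empty_val',
      Matrix.zero_apply, smul_eq_mul] at h01 h02 h03 h12
    norm_num [Complex.ext_iff] at h01 h02 h03 h12
    have e20 : ωB * c 2 0 = 0 := by linear_combination -h01.1
    have e21 : ωB * c 2 1 = 0 := by linear_combination h01.2
    have e02 : ωA * c 0 2 = 0 := by linear_combination -h02.1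
    have e12 : ωA * c 1 2 = 0 := by linear_combination h02.2
    have exx : (ωA + ωB) * (c 0 0 - c 1 1) = 0 := by linear_combination -h03.1
    have exy : (ωA + ωB) * (c 0 1 + c 1 0) = 0 := by linear_combination h03.2
    have c20 := (mul_eq_zero.mp e20).resolve_left hB
    have c21 := (mul_eq_zero.mp e21).resolve_left hB
    have c02 := (mul_eq_zero.mp e02).resolve_left hA
    have c12 := (mul_eq_zero.mp e12).resolve_left hA
    have cxx : c 0 0 = c 1 1 := by
      have := (mul_eq_zero.mp exx).resolve_left hAB; linarith
    have cxy : c 0 1 = -(c 1 0) := by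
      have := (mul_eq_zero.mp exy).resolve_left hAB; linarith
    refine ⟨c02, c12, c20, c21, ?_⟩
    by_cases hw : ωA = ωB
    · exact Or.inr ⟨hw, cxx, cxy⟩
    · have hw' : ωB - ωA ≠ 0 := fun hc => hw (by linarith)
      have f1 : (ωB - ωA) * (c 0 0 + c 1 1) = 0 := by linear_combination h12.1
      have f2 : (ωB - ωA) * (c 0 1 - c 1 0) = 0 := by linear_combination h12.2
      have g1 := (mul_eq_zero.mp f1).resolve_left hw'
      have g2 := (mul_eq_zero.mp f2).resolve_left hw'
      exact Or.inl ⟨hw, by linarith, by linarith, by linarith, by linarith⟩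
  · rintro ⟨c02, c12, c20, c21, ⟨hw, c00, c01, c10, c11⟩ | ⟨hw, cxx, cxy⟩⟩
    · exact two_body_aux1 ωA ωB c c02 c12 c20 c21 c00 c01 c10 c11
    · subst hw
      exact two_body_aux2 ωA c c02 c12 c20 c21 cxx cxy
end
end

section
/- Diagonal-pair sign lemma. Let qubits A_k and B_l have equal frequency ω > 0 and pair interaction H_{kl} = c σ^−_{A_k}σ^+_{B_l} + c̄ σ^+_{A_k}σ^−_{B_l}, and let H_{B0} contain the term −(ω/2)σ^z_{B_l}. Let ρ be a density matrix whose single-qubit reduced states are Gibbs: ρ_{A_k} = e^{β_{A_k} ω σ^z/2}/(2 cosh(β_{A_k}ω/2)) and ρ_{B_l} = e^{β_{B_l} ω σ^z/2}/(2 cosh(β_{B_l}ω/2)). Then the diagonal second-derivative contribution satisfies −tr( ρ [H_{kl}, [H_{kl}, H_{B0}]] ) = |c|² ω ( tanh(β_{B_l}ω/2) − tanh(β_{A_k}ω/2) ); in particular (β_{B_l} − β_{A_k}) · ( −tr( ρ [H_{kl}, [H_{kl}, H_{B0}]] ) ) ≥ 0, with equality only if β_{A_k} = β_{B_l}. -/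
open Matrix Kronecker Complex
open scoped ComplexOrder

noncomputable section

section Aux
variable {ι : Type*} [Fintype ι] [DecidableEq ι]

lemma opAt_apply' (u : ι) (M : Matrix (Fin 2) (Fin 2) ℂ) (f g : ι → Fin 2) :
    opAt u M f g = M (f u) (g u) *
      ∏ i ∈ Finset.univ.erase u, (1 : Matrix (Fin 2) (Fin 2) ℂ) (f i) (g i) := by
  simp only [opAt, tpow, Matrix.of_apply]
  rw [← Finset.mul_prod_erase Finset.univ _ (Finset.mem_univ u), if_pos rfl]
  congr 1
  exact Finset.prod_congr rfl fun i hi => by rw [if_neg (Finset.ne_of_mem_erase hi)]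

lemma tpow_mul (M N : ι → Matrix (Fin 2) (Fin 2) ℂ) :
    tpow M * tpow N = tpow (fun i => M i * N i) := by
  ext f g
  simp only [tpow, Matrix.mul_apply, Matrix.of_apply]
  rw [Fintype.prod_sum]
  exact Finset.sum_congr rfl fun h _ => (Finset.prod_mul_distrib).symm

lemma opAt_one (u : ι) : opAt u (1 : Matrix (Fin 2) (Fin 2) ℂ) = 1 := by
  ext f g
  rw [opAt_apply',
    Finset.prod_congr rfl (fun i _ => (Matrix.one_apply :
      (1 : Matrix (Fin 2) (Fin 2) ℂ) (f i) (g i) = _)),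
    Finset.prod_boole, Matrix.one_apply, Matrix.one_apply]
  by_cases h : f = g
  · subst h; simp
  · rw [if_neg h]
    by_cases h1 : f u = g u
    · rw [if_pos h1, one_mul, if_neg]
      intro hall
      apply h; funext i
      by_cases hi : i = u
      · subst hi; exact h1
      · exact hall i (Finset.mem_erase.2 ⟨hi, Finset.mem_univ i⟩)
    · rw [if_neg h1, zero_mul]

lemma opAt_mul_same (u : ι) (M N : Matrix (Fin 2) (Fin 2) ℂ) :
    opAt u M * opAt u N = opAt u (M * N) := by
  rw [opAt, opAt, opAt, tpow_mul]
  have : (fun i => (if i = u then M else 1) * (if i = u then N else 1))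
      = (fun i => if i = u then M * N else 1) := by
    funext i; by_cases h : i = u <;> simp [h]
  rw [this]

lemma opAt_comm {u v : ι} (h : u ≠ v) (M N : Matrix (Fin 2) (Fin 2) ℂ) :
    opAt u M * opAt v N = opAt v N * opAt u M := by
  rw [opAt, opAt, tpow_mul, tpow_mul]
  have : (fun i => (if i = u then M else 1) * (if i = v then N else 1))
      = (fun i => (if i = v then N else 1) * (if i = u then M else 1)) := by
    funext i
    split_ifs with h1 h2 h3 <;> simp_all
  rw [this]

lemma opAt_smul (u : ι) (r : ℂ) (M : Matrix (Fin 2) (Fin 2) ℂ) :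
    opAt u (r • M) = r • opAt u M := by
  ext f g
  simp only [Matrix.smul_apply, smul_eq_mul]
  rw [opAt_apply', opAt_apply']
  simp only [Matrix.smul_apply, smul_eq_mul]
  ring

lemma opAt_add (u : ι) (M N : Matrix (Fin 2) (Fin 2) ℂ) :
    opAt u (M + N) = opAt u M + opAt u N := by
  ext f g
  simp only [Matrix.add_apply]
  rw [opAt_apply', opAt_apply', opAt_apply']
  simp only [Matrix.add_apply]
  ring

lemma opAt_sub (u : ι) (M N : Matrix (Fin 2) (Fin 2) ℂ) :
    opAt u (M - N) = opAt u M - opAt u N := by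
  ext f g
  simp only [Matrix.sub_apply]
  rw [opAt_apply', opAt_apply', opAt_apply']
  simp only [Matrix.sub_apply]
  ring

lemma trace_mul_opAt (u : ι) (ρ : Matrix (ι → Fin 2) (ι → Fin 2) ℂ)
    (M : Matrix (Fin 2) (Fin 2) ℂ) :
    (ρ * opAt u M).trace = (rdm1 u ρ * M).trace := by
  have key : ∀ f g : ι → Fin 2, opAt u M f g =
      if f = Function.update g u (f u) then M (f u) (g u) else 0 := by
    intro f g
    rw [opAt_apply',
      Finset.prod_congr rfl (fun i _ => (Matrix.one_apply :
        (1 : Matrix (Fin 2) (Fin 2) ℂ) (f i) (g i) = _)),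
      Finset.prod_boole]
    by_cases h : f = Function.update g u (f u)
    · rw [if_pos h, if_pos, mul_one]
      intro i hi
      conv_lhs => rw [h]
      rw [Function.update_of_ne (Finset.mem_erase.1 hi).1]
    · rw [if_neg h, if_neg, mul_zero]
      intro hall
      apply h; funext i
      by_cases hi : i = u
      · subst hi; rw [Function.update_self]
      · rw [Function.update_of_ne hi]
        exact hall i (Finset.mem_erase.2 ⟨hi, Finset.mem_univ i⟩)
  have lhs : (ρ * opAt u M).trace
      = ∑ g : ι → Fin 2, ∑ b : Fin 2, ρ g (Function.update g u b) * M b (g u) := by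
    simp only [Matrix.trace, Matrix.diag, Matrix.mul_apply]
    refine Finset.sum_congr rfl fun g _ => ?_
    rw [Finset.sum_congr rfl (fun f (_ : f ∈ Finset.univ) => by
      rw [key f g, mul_ite, mul_zero])]
    rw [← Finset.sum_filter]
    refine Finset.sum_nbij' (fun f : ι → Fin 2 => f u)
      (fun b : Fin 2 => Function.update g u b) (fun _ _ => Finset.mem_univ _)
      ?_ ?_ ?_ ?_
    · intro b _
      simp [Finset.mem_filter]
    · intro f hf
      exact ((Finset.mem_filter.1 hf).2).symm
    · intro b _
      exact Function.update_self u b g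
    · intro f hf
      have hfeq := (Finset.mem_filter.1 hf).2
      show ρ g f * M (f u) (g u) = ρ g (Function.update g u (f u)) * M (f u) (g u)
      rw [← hfeq]
  have rhs : (rdm1 u ρ * M).trace
      = ∑ g : ι → Fin 2, ∑ b : Fin 2, ρ g (Function.update g u b) * M b (g u) := by
    simp only [Matrix.trace, Matrix.diag, Matrix.mul_apply, rdm1, Matrix.of_apply,
      Finset.sum_mul, ite_mul, zero_mul]
    have step : ∀ b : Fin 2, (∑ a : Fin 2, ∑ g : ι → Fin 2,
        if g u = a then ρ g (Function.update g u b) * M b a else 0)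
        = ∑ g : ι → Fin 2, ρ g (Function.update g u b) * M b (g u) := by
      intro b
      rw [Finset.sum_comm]
      refine Finset.sum_congr rfl fun g _ => ?_
      simp [Finset.sum_ite_eq]
    rw [Finset.sum_comm, Finset.sum_congr rfl (fun b _ => step b), Finset.sum_comm]
  rw [lhs, rhs]

end Aux

section Aux2

lemma pz_mul : σp * σz = (-1 : ℂ) • σp := by
  ext i j; fin_cases i <;> fin_cases j <;>
    simp [σp, σz, Matrix.mul_apply, Fin.sum_univ_two]

lemma zp_mul : σz * σp = σp := by
  ext i j; fin_cases i <;> fin_cases j <;>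
    simp [σp, σz, Matrix.mul_apply, Fin.sum_univ_two]

lemma mz_mul : σm * σz = σm := by
  ext i j; fin_cases i <;> fin_cases j <;>
    simp [σm, σz, Matrix.mul_apply, Fin.sum_univ_two]

lemma zm_mul : σz * σm = (-1 : ℂ) • σm := by
  ext i j; fin_cases i <;> fin_cases j <;>
    simp [σm, σz, Matrix.mul_apply, Fin.sum_univ_two]

lemma mp_mul : σm * σp = (2 : ℂ)⁻¹ • ((1 : Matrix (Fin 2) (Fin 2) ℂ) - σz) := by
  ext i j; fin_cases i <;> fin_cases j <;>
    simp [σm, σp, σz, Matrix.mul_apply, Fin.sum_univ_two, Matrix.one_apply] <;> norm_num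

lemma pm_mul : σp * σm = (2 : ℂ)⁻¹ • ((1 : Matrix (Fin 2) (Fin 2) ℂ) + σz) := by
  ext i j; fin_cases i <;> fin_cases j <;>
    simp [σm, σp, σz, Matrix.mul_apply, Fin.sum_univ_two, Matrix.one_apply] <;> norm_num

lemma gibbs_trace_z (β ω : ℝ) :
    (gibbsQubit β ω * σz).trace = (Real.tanh (β * ω / 2) : ℂ) := by
  rw [gibbsQubit, σz, Matrix.smul_mul, Matrix.trace_smul, Matrix.mul_fin_two,
    Matrix.trace_fin_two_of]
  rw [Real.tanh_eq_sinh_div_cosh, Real.sinh_eq, Real.cosh_eq]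
  have hexp : -(β * ω) / 2 = -(β * ω / 2) := by ring
  rw [hexp, smul_eq_mul]
  have h2 : ((Real.exp (β * ω / 2) + Real.exp (-(β * ω / 2)) : ℝ) : ℂ) ≠ 0 := by
    exact_mod_cast
      (by positivity : (0:ℝ) < Real.exp (β * ω / 2) + Real.exp (-(β * ω / 2))).ne'
  push_cast
  field_simp
  ring

lemma tanh_sub_tanh (x y : ℝ) :
    Real.tanh x - Real.tanh y = Real.sinh (x - y) / (Real.cosh x * Real.cosh y) := by
  have hx : Real.cosh x ≠ 0 := (Real.cosh_pos _).ne'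
  have hy : Real.cosh y ≠ 0 := (Real.cosh_pos _).ne'
  rw [Real.tanh_eq_sinh_div_cosh, Real.tanh_eq_sinh_div_cosh, Real.sinh_sub]
  field_simp

lemma sinh_nonneg_iff {x : ℝ} : 0 ≤ Real.sinh x ↔ 0 ≤ x := by
  rw [show (0:ℝ) = Real.sinh 0 by rw [Real.sinh_zero], Real.sinh_le_sinh, Real.sinh_zero]

lemma sinh_eq_zero_iff {x : ℝ} : Real.sinh x = 0 ↔ x = 0 := by
  constructor
  · intro h
    have := Real.sinh_strictMono.injective (a₁ := x) (a₂ := 0)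
    rw [Real.sinh_zero] at this
    exact this h
  · rintro rfl; exact Real.sinh_zero

end Aux2


/-- **diagonal-pair sign lemma.** Let qubits `A_k` and `B_l` (in a
multi-qubit system indexed by `Fin NA ⊕ Fin NB`) have equal frequency `ω > 0` and pair
interaction `H_{kl} = c σ⁻_{A_k}σ⁺_{B_l} + c̄ σ⁺_{A_k}σ⁻_{B_l}` (`c ≠ 0`), with
`H_{B0} = -(1/2)Σ_l ω_{B_l}σᶻ_{B_l}` containing the term `-(ω/2)σᶻ_{B_l}`. If the
single-qubit reduced states of a density matrix `ρ` on `A_k` and `B_l` are Gibbs at inverse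
temperatures `β_{A_k}`, `β_{B_l}`, then
`-tr(ρ[H_{kl},[H_{kl},H_{B0}]]) = |c|²ω(tanh(β_{B_l}ω/2) - tanh(β_{A_k}ω/2))`;
in particular `(β_{B_l} - β_{A_k})·(-tr(ρ[H_{kl},[H_{kl},H_{B0}]])) ≥ 0`, with equality
only if `β_{A_k} = β_{B_l}`. -/
theorem diagonal_pair_sign_lemma
    (NA NB : ℕ) (k : Fin NA) (l : Fin NB)
    (ω : ℝ) (hω : 0 < ω) (ωB : Fin NB → ℝ) (hωl : ωB l = ω)
    (c : ℂ) (hc : c ≠ 0)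
    (βA βB : ℝ)
    (HB0 Hkl : Matrix ((Fin NA ⊕ Fin NB) → Fin 2) ((Fin NA ⊕ Fin NB) → Fin 2) ℂ)
    (hHB0 : HB0 = (-(1/2) : ℂ) • ∑ l', (ωB l' : ℂ) • opAt (Sum.inr l') σz)
    (hHkl : Hkl = c • (opAt (Sum.inl k) σm * opAt (Sum.inr l) σp)
        + (starRingEnd ℂ) c • (opAt (Sum.inl k) σp * opAt (Sum.inr l) σm))
    (ρ : Matrix ((Fin NA ⊕ Fin NB) → Fin 2) ((Fin NA ⊕ Fin NB) → Fin 2) ℂ)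
    (hρ : ρ.PosSemidef) (hρtr : ρ.trace = 1)
    (hA : rdm1 (Sum.inl k) ρ = gibbsQubit βA ω)
    (hB : rdm1 (Sum.inr l) ρ = gibbsQubit βB ω) :
    -((ρ * ⁅Hkl, ⁅Hkl, HB0⁆⁆).trace)
        = ((Complex.normSq c * ω * (Real.tanh (βB * ω / 2) - Real.tanh (βA * ω / 2)) : ℝ) : ℂ) ∧
    0 ≤ (βB - βA) * (-((ρ * ⁅Hkl, ⁅Hkl, HB0⁆⁆).trace)).re ∧
    ((βB - βA) * (-((ρ * ⁅Hkl, ⁅Hkl, HB0⁆⁆).trace)).re = 0 → βA = βB) := by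
  classical
  letI : LieRing (Matrix ((Fin NA ⊕ Fin NB) → Fin 2) ((Fin NA ⊕ Fin NB) → Fin 2) ℂ) :=
    LieRing.ofAssociativeRing
  have huv : (Sum.inl k : Fin NA ⊕ Fin NB) ≠ Sum.inr l := by simp
  set u : Fin NA ⊕ Fin NB := Sum.inl k with hu
  set v : Fin NA ⊕ Fin NB := Sum.inr l with hv
  set X := opAt u σm * opAt v σp with hX
  set Y := opAt u σp * opAt v σm with hY
  set zu := opAt u σz with hzu
  set zv := opAt v σz with hzv
  -- single-site product relations
  have hXz : X * zv = (-1 : ℂ) • X := by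
    rw [hX, hzv, mul_assoc, opAt_mul_same, pz_mul, opAt_smul, mul_smul_comm]
  have hzX : zv * X = X := by
    rw [hX, hzv, ← mul_assoc, opAt_comm (Ne.symm huv), mul_assoc, opAt_mul_same, zp_mul]
  have hYz : Y * zv = Y := by
    rw [hY, hzv, mul_assoc, opAt_mul_same, mz_mul]
  have hzY : zv * Y = (-1 : ℂ) • Y := by
    rw [hY, hzv, ← mul_assoc, opAt_comm (Ne.symm huv), mul_assoc, opAt_mul_same, zm_mul,
      opAt_smul, mul_smul_comm]
  have hXYprod : X * Y = opAt u (σm * σp) * opAt v (σp * σm) := by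
    rw [hX, hY, mul_assoc, ← mul_assoc (opAt v σp), opAt_comm (Ne.symm huv),
      mul_assoc (opAt u σp), ← mul_assoc, opAt_mul_same, opAt_mul_same]
  have hYXprod : Y * X = opAt u (σp * σm) * opAt v (σm * σp) := by
    rw [hY, hX, mul_assoc, ← mul_assoc (opAt v σm), opAt_comm (Ne.symm huv),
      mul_assoc (opAt u σm), ← mul_assoc, opAt_mul_same, opAt_mul_same]
  have e1 : ((1 : Matrix ((Fin NA ⊕ Fin NB) → Fin 2) ((Fin NA ⊕ Fin NB) → Fin 2) ℂ) - zu)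
      * (1 + zv) = 1 + zv - zu - zu * zv := by noncomm_ring
  have e2 : ((1 : Matrix ((Fin NA ⊕ Fin NB) → Fin 2) ((Fin NA ⊕ Fin NB) → Fin 2) ℂ) + zu)
      * (1 - zv) = 1 - zv + zu - zu * zv := by noncomm_ring
  have hbrXY : ⁅X, Y⁆ = (2 : ℂ)⁻¹ • (zv - zu) := by
    rw [Ring.lie_def, hXYprod, hYXprod, mp_mul, pm_mul, opAt_smul, opAt_smul, opAt_smul,
      opAt_smul, opAt_sub, opAt_add, opAt_sub, opAt_add, opAt_one, opAt_one, ← hzu, ← hzv,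
      smul_mul_assoc, smul_mul_assoc, mul_smul_comm, mul_smul_comm, smul_smul, smul_smul,
      e1, e2]
    module
  have hbrYX : ⁅Y, X⁆ = (2 : ℂ)⁻¹ • (zu - zv) := by
    rw [Ring.lie_def, hYXprod, hXYprod, mp_mul, pm_mul, opAt_smul, opAt_smul, opAt_smul,
      opAt_smul, opAt_sub, opAt_add, opAt_sub, opAt_add, opAt_one, opAt_one, ← hzu, ← hzv,
      smul_mul_assoc, smul_mul_assoc, mul_smul_comm, mul_smul_comm, smul_smul, smul_smul,
      e1, e2]
    module
  have hbrXz : ⁅X, zv⁆ = (-2 : ℂ) • X := by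
    rw [Ring.lie_def, hXz, hzX]; module
  have hbrYz : ⁅Y, zv⁆ = (2 : ℂ) • Y := by
    rw [Ring.lie_def, hYz, hzY]; module
  have hHz : ⁅Hkl, zv⁆ = (-2 : ℂ) • (c • X) + (2 : ℂ) • ((starRingEnd ℂ) c • Y) := by
    rw [hHkl, add_lie, smul_lie, smul_lie, hbrXz, hbrYz]
    module
  have hcomm : ∀ l' : Fin NB, l' ≠ l → Commute Hkl (opAt (Sum.inr l') σz) := by
    intro l' hl'
    have h1 : u ≠ Sum.inr l' := by simp [hu]
    have h2 : v ≠ Sum.inr l' := by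
      rw [hv]
      exact fun h => hl' (Sum.inr_injective h).symm
    rw [hHkl]
    have c1 : Commute (opAt u σm) (opAt (Sum.inr l') σz) := opAt_comm h1 σm σz
    have c2 : Commute (opAt v σp) (opAt (Sum.inr l') σz) := opAt_comm h2 σp σz
    have c3 : Commute (opAt u σp) (opAt (Sum.inr l') σz) := opAt_comm h1 σp σz
    have c4 : Commute (opAt v σm) (opAt (Sum.inr l') σz) := opAt_comm h2 σm σz
    exact Commute.add_left ((c1.mul_left c2).smul_left c) ((c3.mul_left c4).smul_left _)
  have hHB : ⁅Hkl, HB0⁆ = (ω : ℂ) • (c • X) - (ω : ℂ) • ((starRingEnd ℂ) c • Y) := by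
    rw [hHB0, lie_smul, ← Finset.add_sum_erase _ _ (Finset.mem_univ l), lie_add]
    have hrest : ⁅Hkl, ∑ l' ∈ Finset.univ.erase l,
        (ωB l' : ℂ) • opAt (Sum.inr l' : Fin NA ⊕ Fin NB) σz⁆ = 0 := by
      refine Commute.lie_eq ?_
      refine Commute.sum_right _ _ _ (fun l' hl' => ?_)
      exact (hcomm l' (Finset.mem_erase.1 hl').1).smul_right _
    rw [hrest, add_zero, lie_smul, ← hv, ← hzv, hHz, hωl]
    module
  have hHX : ⁅Hkl, X⁆ = (starRingEnd ℂ) c • ⁅Y, X⁆ := by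
    rw [hHkl, add_lie, smul_lie, smul_lie, lie_self, smul_zero, zero_add]
  have hHY : ⁅Hkl, Y⁆ = c • ⁅X, Y⁆ := by
    rw [hHkl, add_lie, smul_lie, smul_lie, lie_self, smul_zero, add_zero]
  have hcc : (starRingEnd ℂ) c * c = ((Complex.normSq c : ℝ) : ℂ) := by
    rw [mul_comm]; exact Complex.mul_conj c
  have hscal : ((Complex.normSq c * ω : ℝ) : ℂ) = (starRingEnd ℂ) c * c * (ω : ℂ) := by
    rw [Complex.ofReal_mul, ← hcc]
  have hdouble : ⁅Hkl, ⁅Hkl, HB0⁆⁆ = ((Complex.normSq c * ω : ℝ) : ℂ) • (zu - zv) := by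
    rw [hHB, lie_sub, lie_smul, lie_smul, lie_smul, lie_smul, hHX, hHY, hbrYX, hbrXY, hscal]
    module
  have htru : (ρ * zu).trace = (Real.tanh (βA * ω / 2) : ℂ) := by
    rw [hzu, hu, trace_mul_opAt, hA, gibbs_trace_z]
  have htrv : (ρ * zv).trace = (Real.tanh (βB * ω / 2) : ℂ) := by
    rw [hzv, hv, trace_mul_opAt, hB, gibbs_trace_z]
  have hmain : -((ρ * ⁅Hkl, ⁅Hkl, HB0⁆⁆).trace)
      = ((Complex.normSq c * ω *
          (Real.tanh (βB * ω / 2) - Real.tanh (βA * ω / 2)) : ℝ) : ℂ) := by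
    rw [hdouble, Matrix.mul_smul, Matrix.trace_smul, mul_sub, Matrix.trace_sub, htru, htrv,
      smul_eq_mul]
    push_cast
    ring
  have hre : (-((ρ * ⁅Hkl, ⁅Hkl, HB0⁆⁆).trace)).re
      = Complex.normSq c * ω * (Real.tanh (βB * ω / 2) - Real.tanh (βA * ω / 2)) := by
    rw [hmain, Complex.ofReal_re]
  have hforms : Real.tanh (βB * ω / 2) - Real.tanh (βA * ω / 2)
      = Real.sinh ((βB - βA) * ω / 2)
        / (Real.cosh (βB * ω / 2) * Real.cosh (βA * ω / 2)) := by
    rw [tanh_sub_tanh, show βB * ω / 2 - βA * ω / 2 = (βB - βA) * ω / 2 by ring]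
  have hsign : 0 ≤ (βB - βA) * Real.sinh ((βB - βA) * ω / 2) := by
    rcases le_or_gt 0 (βB - βA) with h | h
    · exact mul_nonneg h (sinh_nonneg_iff.2 (by positivity))
    · have h1 : Real.sinh ((βB - βA) * ω / 2) ≤ 0 := by
        rw [show (0 : ℝ) = Real.sinh 0 from Real.sinh_zero.symm, Real.sinh_le_sinh]
        nlinarith
      nlinarith [mul_nonneg (neg_nonneg.2 h.le) (neg_nonneg.2 h1)]
  have hcosh : 0 < Real.cosh (βB * ω / 2) * Real.cosh (βA * ω / 2) :=
    mul_pos (Real.cosh_pos _) (Real.cosh_pos _)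
  refine ⟨hmain, ?_, ?_⟩
  · rw [hre, hforms,
      show (βB - βA) * (Complex.normSq c * ω * (Real.sinh ((βB - βA) * ω / 2)
          / (Real.cosh (βB * ω / 2) * Real.cosh (βA * ω / 2))))
        = (Complex.normSq c * ω * ((βB - βA) * Real.sinh ((βB - βA) * ω / 2)))
          / (Real.cosh (βB * ω / 2) * Real.cosh (βA * ω / 2)) by ring]
    exact div_nonneg (mul_nonneg (mul_nonneg (Complex.normSq_nonneg c) hω.le) hsign) hcosh.le
  · intro h
    by_contra hne
    rw [hre, hforms,
      show (βB - βA) * (Complex.normSq c * ω * (Real.sinh ((βB - βA) * ω / 2)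
          / (Real.cosh (βB * ω / 2) * Real.cosh (βA * ω / 2))))
        = (Complex.normSq c * ω * ((βB - βA) * Real.sinh ((βB - βA) * ω / 2)))
          / (Real.cosh (βB * ω / 2) * Real.cosh (βA * ω / 2)) by ring] at h
    have hs : βB - βA ≠ 0 := sub_ne_zero.2 (Ne.symm hne)
    have hsinh : Real.sinh ((βB - βA) * ω / 2) ≠ 0 := by
      rw [ne_eq, sinh_eq_zero_iff]
      intro h0
      have h1 : (βB - βA) * ω = 0 := by linarith
      rcases mul_eq_zero.1 h1 with h' | h'
      · exact hs h'
      · exact hω.ne' h'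
    have hnsq : Complex.normSq c ≠ 0 := by
      simpa [Complex.normSq_eq_zero] using hc
    exact (div_ne_zero
      (mul_ne_zero (mul_ne_zero hnsq hω.ne') (mul_ne_zero hs hsinh)) hcosh.ne') h
end
end

section
/- Stationarity of the product Gibbs state at the phase boundary. With three qubits A_1, A_2, B, ω_{A_1} = ω_{A_2} + ω_B > 0, H = −(ω_{A_1}/2)σ^z_{A_1} − (ω_{A_2}/2)σ^z_{A_2} − (ω_B/2)σ^z_B + H_I where H_I = c σ^+_{A_1}σ^−_{A_2}σ^−_B + c̄ σ^−_{A_1}σ^+_{A_2}σ^+_B with c ≠ 0, and the product Gibbs state ρ_0 = ⊗_u e^{β_u ω_u σ^z/2}/(2cosh(β_u ω_u/2)): the state ρ_0 commutes with H (i.e., is stationary, e^{−iHt}ρ_0e^{iHt} = ρ_0 for all t) if and only if β_{A_1}ω_{A_1} = β_{A_2}ω_{A_2} + β_B ω_B. -/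
open Matrix Kronecker Complex
open scoped ComplexOrder

noncomputable section

lemma aux_tpow_mul {ι : Type*} [Fintype ι] [DecidableEq ι] (M N : ι → Matrix (Fin 2) (Fin 2) ℂ) :
    tpow M * tpow N = tpow (fun i => M i * N i) := by
  ext f g
  simp only [tpow, Matrix.mul_apply, Matrix.of_apply]
  rw [← Fintype.piFinset_univ, Finset.prod_univ_sum]
  exact Finset.sum_congr rfl fun j _ => (Finset.prod_mul_distrib).symm

lemma aux_tpow_diag {ι : Type*} [Fintype ι] [DecidableEq ι] (v : ι → Fin 2 → ℂ) :
    tpow (fun i => Matrix.diagonal (v i)) = Matrix.diagonal (fun g => ∏ i, v i (g i)) := by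
  ext f g
  by_cases h : f = g
  · subst h
    simp [tpow, Matrix.diagonal_apply_eq]
  · obtain ⟨i, hi⟩ := Function.ne_iff.mp h
    rw [Matrix.diagonal_apply_ne _ h]
    exact Finset.prod_eq_zero (Finset.mem_univ i) (Matrix.diagonal_apply_ne _ hi)

lemma aux_gibbs_diag (β ω : ℝ) :
    gibbsQubit β ω = Matrix.diagonal
      ![((2 * Real.cosh (β * ω / 2) : ℝ) : ℂ)⁻¹ * Real.exp (β * ω / 2),
        ((2 * Real.cosh (β * ω / 2) : ℝ) : ℂ)⁻¹ * Real.exp (-(β * ω) / 2)] := by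
  unfold gibbsQubit
  ext i j
  fin_cases i <;> fin_cases j <;> simp [Matrix.diagonal]

lemma aux_sigmaz_diag : σz = Matrix.diagonal ![1, -1] := by
  ext i j
  fin_cases i <;> fin_cases j <;> simp [σz, Matrix.diagonal]

lemma aux_diag_comm {n : Type*} [Fintype n] [DecidableEq n] (d : n → ℂ) (M : Matrix n n ℂ) :
    Matrix.diagonal d * M = M * Matrix.diagonal d ↔ ∀ i j, (d i - d j) * M i j = 0 := by
  constructor
  · intro h i j
    have := Matrix.ext_iff.mpr h i j
    rw [Matrix.diagonal_mul, Matrix.mul_diagonal] at this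
    ring_nf
    linear_combination this
  · intro h
    ext i j
    rw [Matrix.diagonal_mul, Matrix.mul_diagonal]
    linear_combination h i j

lemma aux_sigp_ne {a b : Fin 2} (h : σp a b ≠ 0) : a = 0 ∧ b = 1 := by
  fin_cases a <;> fin_cases b <;> simp_all [σp]

lemma aux_sigm_ne {a b : Fin 2} (h : σm a b ≠ 0) : a = 1 ∧ b = 0 := by
  fin_cases a <;> fin_cases b <;> simp_all [σm]

lemma aux_HI_prod1 :
    opAt (0 : Fin 3) σp * opAt (1 : Fin 3) σm * opAt (2 : Fin 3) σm = tpow ![σp, σm, σm] := by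
  unfold opAt
  rw [aux_tpow_mul, aux_tpow_mul]
  exact congrArg tpow (by funext i; fin_cases i <;> simp)

lemma aux_HI_prod2 :
    opAt (0 : Fin 3) σm * opAt (1 : Fin 3) σp * opAt (2 : Fin 3) σp = tpow ![σm, σp, σp] := by
  unfold opAt
  rw [aux_tpow_mul, aux_tpow_mul]
  exact congrArg tpow (by funext i; fin_cases i <;> simp)

lemma aux_P_ne {f g : Fin 3 → Fin 2} (h : tpow ![σp, σm, σm] f g ≠ 0) :
    f = ![0, 1, 1] ∧ g = ![1, 0, 0] := by
  rw [tpow, Matrix.of_apply, Fin.prod_univ_three] at h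
  simp only [Matrix.cons_val_zero, Matrix.cons_val_one, Matrix.head_cons,
    Matrix.cons_val_two, Matrix.tail_cons] at h
  have h0 := aux_sigp_ne (left_ne_zero_of_mul (left_ne_zero_of_mul h))
  have h1 := aux_sigm_ne (right_ne_zero_of_mul (left_ne_zero_of_mul h))
  have h2 := aux_sigm_ne (right_ne_zero_of_mul h)
  constructor <;> (funext i; fin_cases i <;> simp [h0.1, h0.2, h1.1, h1.2, h2.1, h2.2])

lemma aux_Q_ne {f g : Fin 3 → Fin 2} (h : tpow ![σm, σp, σp] f g ≠ 0) :
    f = ![1, 0, 0] ∧ g = ![0, 1, 1] := by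
  rw [tpow, Matrix.of_apply, Fin.prod_univ_three] at h
  simp only [Matrix.cons_val_zero, Matrix.cons_val_one, Matrix.head_cons,
    Matrix.cons_val_two, Matrix.tail_cons] at h
  have h0 := aux_sigm_ne (left_ne_zero_of_mul (left_ne_zero_of_mul h))
  have h1 := aux_sigp_ne (right_ne_zero_of_mul (left_ne_zero_of_mul h))
  have h2 := aux_sigp_ne (right_ne_zero_of_mul h)
  constructor <;> (funext i; fin_cases i <;> simp [h0.1, h0.2, h1.1, h1.2, h2.1, h2.2])

lemma aux_P_val : tpow ![σp, σm, σm] ![0, 1, 1] ![1, 0, 0] = 1 := by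
  rw [tpow, Matrix.of_apply, Fin.prod_univ_three]
  simp [σp, σm]

lemma aux_Q_val : tpow ![σm, σp, σp] ![0, 1, 1] ![1, 0, 0] = 0 := by
  rw [tpow, Matrix.of_apply, Fin.prod_univ_three]
  simp [σp, σm]

lemma aux_evolve_iff {n : Type*} [Fintype n] [DecidableEq n] (H ρ : Matrix n n ℂ) :
    (∀ t : ℝ, evolve H ρ t = ρ) ↔ ρ * H = H * ρ := by
  letI : SeminormedRing (Matrix n n ℂ) := Matrix.linftyOpSemiNormedRing
  letI : NormedRing (Matrix n n ℂ) := Matrix.linftyOpNormedRing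
  letI : NormedAlgebra ℂ (Matrix n n ℂ) := Matrix.linftyOpNormedAlgebra
  letI : NormedAlgebra ℝ (Matrix n n ℂ) := Matrix.linftyOpNormedAlgebra
  constructor
  · intro hall
    have h1 : HasDerivAt (fun t : ℝ => (t : ℂ)) 1 0 := by
      simpa using (hasDerivAt_id (0 : ℝ)).ofReal_comp
    have hinnerU : HasDerivAt (fun t : ℝ => -(I * (t : ℂ))) (-I) 0 := by
      have h2 := h1.const_mul (-I)
      have heq : (fun t : ℝ => -I * (t : ℂ)) = fun t : ℝ => -(I * (t : ℂ)) := by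
        funext t; ring
      rw [heq] at h2; simpa using h2
    have hinnerV : HasDerivAt (fun t : ℝ => I * (t : ℂ)) I 0 := by
      simpa using h1.const_mul I
    have hu : HasDerivAt (fun t : ℝ => NormedSpace.exp ((-(I * (t : ℂ))) • H))
        ((-I) • (NormedSpace.exp ((0 : ℂ) • H) * H)) 0 := by
      exact (hasDerivAt_exp_smul_const (𝕂 := ℂ) H 0).scomp_of_eq (x := 0) (hh := hinnerU) (hy := by simp)
    have hv : HasDerivAt (fun t : ℝ => NormedSpace.exp (((I * (t : ℂ))) • H))
        (I • (NormedSpace.exp ((0 : ℂ) • H) * H)) 0 := by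
      exact (hasDerivAt_exp_smul_const (𝕂 := ℂ) H 0).scomp_of_eq (x := 0) (hh := hinnerV) (hy := by simp)
    rw [zero_smul, NormedSpace.exp_zero, one_mul] at hu hv
    have hρv : HasDerivAt (fun t : ℝ => ρ * NormedSpace.exp (((I * (t : ℂ))) • H))
        (ρ * (I • H)) 0 := hv.const_mul ρ
    have hf := hu.mul hρv
    have hcf : (fun t : ℝ => NormedSpace.exp ((-(I * (t : ℂ))) • H) *
        (ρ * NormedSpace.exp (((I * (t : ℂ))) • H))) = fun _ => ρ := by
      funext t
      rw [← mul_assoc]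
      exact hall t
    simp only [Pi.mul_def] at hf
    rw [hcf] at hf
    have hz := hf.unique (hasDerivAt_const 0 ρ)
    simp only [Complex.ofReal_zero, mul_zero, neg_zero, zero_smul, NormedSpace.exp_zero,
      mul_one, one_mul] at hz
    have hz2 : (-I) • (H * ρ) + I • (ρ * H) = 0 := by
      rw [← smul_mul_assoc, ← mul_smul_comm]
      linear_combination (norm := module) hz
    have hz3 : I • (ρ * H - H * ρ) = 0 := by
      rw [smul_sub]
      linear_combination (norm := module) hz2
    have := (smul_eq_zero.mp hz3).resolve_left I_ne_zero
    exact sub_eq_zero.mp this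
  · intro hcomm t
    rw [evolve]
    have hC : Commute ρ ((-(I * (t : ℂ))) • H) := (show Commute ρ H from hcomm).smul_right _
    have hce : Commute ρ (NormedSpace.exp ((-(I * (t : ℂ))) • H)) := hC.exp_right
    rw [← hce.eq, mul_assoc]
    have hne : (-(I * (t : ℂ))) • H = -((I * (t : ℂ)) • H) := by rw [neg_smul]
    rw [hne]
    rw [← Matrix.exp_add_of_commute _ _ ((Commute.refl ((I * (t : ℂ)) • H)).neg_left), neg_add_cancel,
      NormedSpace.exp_zero, mul_one]

def gv (β ω : ℝ) : Fin 2 → ℂ :=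
  ![((2 * Real.cosh (β * ω / 2) : ℝ) : ℂ)⁻¹ * Real.exp (β * ω / 2),
    ((2 * Real.cosh (β * ω / 2) : ℝ) : ℂ)⁻¹ * Real.exp (-(β * ω) / 2)]

lemma aux_gibbs_diag' (β ω : ℝ) : gibbsQubit β ω = Matrix.diagonal (gv β ω) := aux_gibbs_diag β ω

lemma aux_cosh_ne (t : ℝ) : ((2 * Real.cosh t : ℝ) : ℂ) ≠ 0 :=
  Complex.ofReal_ne_zero.mpr (by positivity)

lemma aux_D_cond (βA1 ωA1 βA2 ωA2 βB ωB : ℝ) :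
    ((∏ i, ![gv βA1 ωA1, gv βA2 ωA2, gv βB ωB] i ((![0,1,1] : Fin 3 → Fin 2) i)) =
     (∏ i, ![gv βA1 ωA1, gv βA2 ωA2, gv βB ωB] i ((![1,0,0] : Fin 3 → Fin 2) i)))
    ↔ βA1 * ωA1 = βA2 * ωA2 + βB * ωB := by
  rw [Fin.prod_univ_three, Fin.prod_univ_three]
  simp only [Matrix.cons_val_zero, Matrix.cons_val_one, Matrix.head_cons,
    Matrix.cons_val_two, Matrix.tail_cons]
  unfold gv
  simp only [Matrix.cons_val_zero, Matrix.cons_val_one, Matrix.head_cons]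
  set n1 := ((2 * Real.cosh (βA1 * ωA1 / 2) : ℝ) : ℂ) with hn1def
  set n2 := ((2 * Real.cosh (βA2 * ωA2 / 2) : ℝ) : ℂ) with hn2def
  set n3 := ((2 * Real.cosh (βB * ωB / 2) : ℝ) : ℂ) with hn3def
  have hn : (n1 * n2 * n3)⁻¹ ≠ 0 := by
    apply inv_ne_zero
    exact mul_ne_zero (mul_ne_zero (aux_cosh_ne _) (aux_cosh_ne _)) (aux_cosh_ne _)
  have l1 : n1⁻¹ * (Real.exp (βA1 * ωA1 / 2) : ℂ) * (n2⁻¹ * (Real.exp (-(βA2 * ωA2) / 2) : ℂ)) *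
      (n3⁻¹ * (Real.exp (-(βB * ωB) / 2) : ℂ)) =
      (n1 * n2 * n3)⁻¹ * ((Real.exp (βA1 * ωA1 / 2 + -(βA2 * ωA2) / 2 + -(βB * ωB) / 2) : ℝ) : ℂ) := by
    rw [Real.exp_add, Real.exp_add]
    push_cast
    rw [mul_inv, mul_inv]
    ring
  have l2 : n1⁻¹ * (Real.exp (-(βA1 * ωA1) / 2) : ℂ) * (n2⁻¹ * (Real.exp (βA2 * ωA2 / 2) : ℂ)) *
      (n3⁻¹ * (Real.exp (βB * ωB / 2) : ℂ)) =
      (n1 * n2 * n3)⁻¹ * ((Real.exp (-(βA1 * ωA1) / 2 + βA2 * ωA2 / 2 + βB * ωB / 2) : ℝ) : ℂ) := by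
    rw [Real.exp_add, Real.exp_add]
    push_cast
    rw [mul_inv, mul_inv]
    ring
  rw [l1, l2, mul_right_inj' hn, Complex.ofReal_inj, Real.exp_eq_exp]
  constructor <;> intro h <;> linarith

lemma aux_opAt_sigz_off {u : Fin 3} {f g : Fin 3 → Fin 2} (h : f ≠ g) : opAt u σz f g = 0 := by
  have he : opAt u σz
      = tpow (fun i => Matrix.diagonal (if i = u then ![1, -1] else fun _ => 1)) := by
    unfold opAt
    refine congrArg tpow (funext fun i => ?_)
    by_cases hi : i = u
    · simp [hi, aux_sigmaz_diag]
    · simp [hi]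
  rw [he, aux_tpow_diag]
  exact Matrix.diagonal_apply_ne _ h

lemma aux_xy_ne : (![0, 1, 1] : Fin 3 → Fin 2) ≠ ![1, 0, 0] := by
  intro h
  have := congrFun h 0
  simp at this


/-- **stationarity of the product Gibbs state at the phase boundary.**
For qubits `A₁ = 0, A₂ = 1, B = 2`, `ω_{A₁} = ω_{A₂} + ω_B > 0`,
`H = -(ω_{A₁}/2)σᶻ_{A₁} - (ω_{A₂}/2)σᶻ_{A₂} - (ω_B/2)σᶻ_B + H_I` with
`H_I = c σ⁺_{A₁}σ⁻_{A₂}σ⁻_B + c̄ σ⁻_{A₁}σ⁺_{A₂}σ⁺_B`, `c ≠ 0`, and product Gibbs state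
`ρ₀`: `ρ₀` commutes with `H` (equivalently, `e^{-iHt}ρ₀e^{iHt} = ρ₀` for all `t`, i.e. `ρ₀`
is stationary) if and only if `β_{A₁}ω_{A₁} = β_{A₂}ω_{A₂} + β_Bω_B`. -/
theorem product_gibbs_stationary_iff_phase_boundary
    (ωA1 ωA2 ωB : ℝ) (hfreq : ωA1 = ωA2 + ωB) (hωA1 : 0 < ωA1)
    (c : ℂ) (hc : c ≠ 0)
    (βA1 βA2 βB : ℝ)
    (HI H : Matrix ((Fin 3) → Fin 2) ((Fin 3) → Fin 2) ℂ)
    (hHI : HI = c • (opAt (0 : Fin 3) σp * opAt (1 : Fin 3) σm * opAt (2 : Fin 3) σm)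
        + (starRingEnd ℂ) c • (opAt (0 : Fin 3) σm * opAt (1 : Fin 3) σp * opAt (2 : Fin 3) σp))
    (hH : H = ((-(ωA1/2) : ℝ) : ℂ) • opAt (0 : Fin 3) σz
        + ((-(ωA2/2) : ℝ) : ℂ) • opAt (1 : Fin 3) σz
        + ((-(ωB/2) : ℝ) : ℂ) • opAt (2 : Fin 3) σz + HI)
    (ρ₀ : Matrix ((Fin 3) → Fin 2) ((Fin 3) → Fin 2) ℂ)
    (hρ₀ : ρ₀ = tpow ![gibbsQubit βA1 ωA1, gibbsQubit βA2 ωA2, gibbsQubit βB ωB]) :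
    (ρ₀ * H = H * ρ₀ ↔ βA1 * ωA1 = βA2 * ωA2 + βB * ωB) ∧
    ((∀ t : ℝ, evolve H ρ₀ t = ρ₀) ↔ βA1 * ωA1 = βA2 * ωA2 + βB * ωB) := by
  set D : (Fin 3 → Fin 2) → ℂ :=
    fun g => ∏ i, ![gv βA1 ωA1, gv βA2 ωA2, gv βB ωB] i (g i) with hD
  have hρdiag : ρ₀ = Matrix.diagonal D := by
    rw [hρ₀]
    have hvf : (![gibbsQubit βA1 ωA1, gibbsQubit βA2 ωA2, gibbsQubit βB ωB]) =
        (fun i => Matrix.diagonal (![gv βA1 ωA1, gv βA2 ωA2, gv βB ωB] i)) := by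
      funext i; fin_cases i <;> simp [aux_gibbs_diag']
    rw [hvf, aux_tpow_diag]
  have hDxy : (D ![0, 1, 1] = D ![1, 0, 0]) ↔ βA1 * ωA1 = βA2 * ωA2 + βB * ωB := by
    simp only [hD]
    exact aux_D_cond βA1 ωA1 βA2 ωA2 βB ωB
  have hHentry : ∀ f g : Fin 3 → Fin 2, f ≠ g →
      H f g = c * tpow ![σp, σm, σm] f g + (starRingEnd ℂ) c * tpow ![σm, σp, σp] f g := by
    intro f g hfg
    rw [hH, hHI, aux_HI_prod1, aux_HI_prod2]
    simp only [Matrix.add_apply, Matrix.smul_apply, smul_eq_mul]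
    rw [aux_opAt_sigz_off hfg, aux_opAt_sigz_off hfg, aux_opAt_sigz_off hfg]
    ring
  have h1 : ρ₀ * H = H * ρ₀ ↔ βA1 * ωA1 = βA2 * ωA2 + βB * ωB := by
    rw [hρdiag, aux_diag_comm]
    constructor
    · intro hall
      have hkey := hall ![0, 1, 1] ![1, 0, 0]
      rw [hHentry _ _ aux_xy_ne, aux_P_val, aux_Q_val, mul_one, mul_zero, add_zero] at hkey
      rcases mul_eq_zero.mp hkey with h | h
      · exact hDxy.mp (sub_eq_zero.mp h)
      · exact absurd h hc
    · intro hcond f g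
      by_cases hfg : f = g
      · subst hfg; simp
      · rw [hHentry f g hfg, mul_add]
        have hDeq : D ![0, 1, 1] = D ![1, 0, 0] := hDxy.mpr hcond
        have hP : (D f - D g) * (c * tpow ![σp, σm, σm] f g) = 0 := by
          by_cases hz : tpow ![σp, σm, σm] f g = 0
          · rw [hz]; ring
          · obtain ⟨hfx, hgy⟩ := aux_P_ne hz
            rw [hfx, hgy, hDeq, sub_self, zero_mul]
        have hQ : (D f - D g) * ((starRingEnd ℂ) c * tpow ![σm, σp, σp] f g) = 0 := by
          by_cases hz : tpow ![σm, σp, σp] f g = 0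
          · rw [hz]; ring
          · obtain ⟨hfx, hgy⟩ := aux_Q_ne hz
            rw [hfx, hgy, hDeq, sub_self, zero_mul]
        rw [hP, hQ, add_zero]
  exact ⟨h1, (aux_evolve_iff H ρ₀).trans h1⟩
end
end
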